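/- arXiv:2407.03741 — 3 statements merged into one kernel-verified Lean document; each statement's English description precedes it below -/
import Mathlib

section
/- (Rician fading expectation.) Let Ω > 0, σ > 0, θ ∈ (0, π/2], u ≥ 0, and K ≥ 0. Then ∫_0^∞ exp( −r²u² / (4σ² sin²θ) ) · ( 2(K+1) r / Ω ) · exp( −( K + (K+1) r² / Ω ) ) · ( Σ_{j=0}^∞ ( K(K+1) r² / Ω )^j / (j!)² ) dr = ( 4(K+1) σ² sin²θ / ( Ω u² + 4(K+1) σ² sin²θ ) ) · exp( −K Ω u² / ( Ω u² + 4(K+1) σ² sin²θ ) ). -/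
open Real MeasureTheory

lemma aux_int {b : ℝ} (hb : 0 < b) (j : ℕ) :
    ∫ x in Set.Ioi (0:ℝ), x ^ (2*j+1) * Real.exp (-(b * x^2))
      = (j.factorial : ℝ) / (2 * b ^ (j+1)) := by
  have h1 : ∫ x in Set.Ioi (0:ℝ), x ^ (2*j+1) * Real.exp (-(b * x^2))
      = ∫ x in Set.Ioi (0:ℝ), x ^ ((2*j+1 : ℕ) : ℝ) * Real.exp (-b * x ^ (2:ℝ)) := by
    refine setIntegral_congr_fun measurableSet_Ioi (fun x hx => ?_)
    rw [Real.rpow_natCast, Real.rpow_two, neg_mul]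
  have hq : (-1:ℝ) < ((2*j+1 : ℕ):ℝ) := by
    have : (0:ℝ) ≤ ((2*j+1:ℕ):ℝ) := Nat.cast_nonneg _
    linarith
  rw [h1, integral_rpow_mul_exp_neg_mul_rpow two_pos hq hb]
  have h2 : (-(((2*j+1 : ℕ):ℝ) + 1) / 2) = -((j:ℝ)+1) := by push_cast; ring
  have h3 : ((((2*j+1 : ℕ):ℝ)) + 1) / 2 = (j:ℝ)+1 := by push_cast; ring
  rw [h2, h3, Real.Gamma_nat_eq_factorial, Real.rpow_neg hb.le]
  have h4 : b ^ ((j:ℝ)+1) = b ^ (j+1) := by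
    rw [show ((j:ℝ)+1) = ((j+1 : ℕ):ℝ) by push_cast; ring, Real.rpow_natCast]
  rw [h4]
  have : (0:ℝ) < b ^ (j+1) := by positivity
  field_simp

lemma aux_exp_tsum (x : ℝ) : Real.exp x = ∑' n : ℕ, x ^ n / n.factorial := by
  rw [Real.exp_eq_exp_ℝ, NormedSpace.exp_eq_tsum_div]

/-- Rician fading expectation: for `Ω > 0`, `σ > 0`, `θ ∈ (0, π/2]`, `u ≥ 0` and `K ≥ 0`,
`∫_0^∞ exp(−r²u²/(4σ² sin²θ)) (2(K+1)r/Ω) exp(−(K+(K+1)r²/Ω)) Σ_j (K(K+1)r²/Ω)^j/(j!)² dr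
  = (4(K+1)σ² sin²θ/(Ωu² + 4(K+1)σ² sin²θ)) exp(−KΩu²/(Ωu² + 4(K+1)σ² sin²θ))`. -/
theorem rician_fading_expectation (Ω σ θ u K : ℝ)
    (hΩ : 0 < Ω) (hσ : 0 < σ) (hθ : 0 < θ) (hθ' : θ ≤ π / 2) (hu : 0 ≤ u) (hK : 0 ≤ K) :
    (∫ r in Set.Ioi (0 : ℝ),
        Real.exp (-(r ^ 2 * u ^ 2 / (4 * σ ^ 2 * Real.sin θ ^ 2))) *
          ((2 * (K + 1) * r / Ω) * Real.exp (-(K + (K + 1) * r ^ 2 / Ω)) *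
            ∑' j : ℕ, (K * (K + 1) * r ^ 2 / Ω) ^ j / ((Nat.factorial j : ℝ)) ^ 2))
      = (4 * (K + 1) * σ ^ 2 * Real.sin θ ^ 2 /
            (Ω * u ^ 2 + 4 * (K + 1) * σ ^ 2 * Real.sin θ ^ 2)) *
          Real.exp (-(K * Ω * u ^ 2 / (Ω * u ^ 2 + 4 * (K + 1) * σ ^ 2 * Real.sin θ ^ 2))) := by
  have hs0 : 0 < Real.sin θ := Real.sin_pos_of_pos_of_lt_pi hθ (lt_of_le_of_lt hθ' (by
    have := Real.pi_pos; linarith))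
  set s : ℝ := Real.sin θ with hs
  -- abbreviations
  set a : ℝ := u ^ 2 / (4 * σ ^ 2 * s ^ 2) with ha
  set b : ℝ := (K + 1) / Ω with hb
  set L : ℝ := a + b with hLdef
  set c : ℝ := K * (K + 1) / Ω with hc
  set D : ℝ := Ω * u ^ 2 + 4 * (K + 1) * σ ^ 2 * s ^ 2 with hD
  have ha0 : 0 ≤ a := by positivity
  have hb0 : 0 < b := by positivity
  have hL : 0 < L := by positivity
  have hc0 : 0 ≤ c := by positivity
  have hD0 : 0 < D := by positivity
  -- the summands
  set F : ℕ → ℝ → ℝ := fun j r =>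
    (2 * (K + 1) / Ω * Real.exp (-K) * (c ^ j / (j.factorial : ℝ) ^ 2)) *
      (r ^ (2 * j + 1) * Real.exp (-(L * r ^ 2))) with hF
  have hCj : ∀ j : ℕ, 0 ≤ 2 * (K + 1) / Ω * Real.exp (-K) * (c ^ j / (j.factorial : ℝ) ^ 2) :=
    fun j => mul_nonneg (mul_nonneg (by positivity) (Real.exp_nonneg _))
      (div_nonneg (pow_nonneg hc0 _) (by positivity))
  -- pointwise identity
  have hpt : ∀ r ∈ Set.Ioi (0:ℝ),
      Real.exp (-(r ^ 2 * u ^ 2 / (4 * σ ^ 2 * s ^ 2))) *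
          ((2 * (K + 1) * r / Ω) * Real.exp (-(K + (K + 1) * r ^ 2 / Ω)) *
            ∑' j : ℕ, (c * r ^ 2) ^ j / ((j.factorial : ℝ)) ^ 2)
        = ∑' j : ℕ, F j r := by
    intro r _
    rw [show Real.exp (-(r ^ 2 * u ^ 2 / (4 * σ ^ 2 * s ^ 2))) *
          ((2 * (K + 1) * r / Ω) * Real.exp (-(K + (K + 1) * r ^ 2 / Ω)) *
            ∑' j : ℕ, (c * r ^ 2) ^ j / ((j.factorial : ℝ)) ^ 2)
        = (Real.exp (-(r ^ 2 * u ^ 2 / (4 * σ ^ 2 * s ^ 2))) *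
            (2 * (K + 1) * r / Ω) * Real.exp (-(K + (K + 1) * r ^ 2 / Ω))) *
            ∑' j : ℕ, (c * r ^ 2) ^ j / ((j.factorial : ℝ)) ^ 2 by ring,
      ← tsum_mul_left]
    refine tsum_congr (fun j => ?_)
    have he : Real.exp (-(r ^ 2 * u ^ 2 / (4 * σ ^ 2 * s ^ 2))) *
        Real.exp (-(K + (K + 1) * r ^ 2 / Ω)) =
        Real.exp (-K) * Real.exp (-(L * r ^ 2)) := by
      rw [← Real.exp_add, ← Real.exp_add]
      congr 1
      rw [hLdef, ha, hb]
      field_simp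
      ring
    simp only [hF]
    rw [mul_pow, ← pow_mul]
    calc (Real.exp (-(r ^ 2 * u ^ 2 / (4 * σ ^ 2 * s ^ 2))) * (2 * (K + 1) * r / Ω) *
            Real.exp (-(K + (K + 1) * r ^ 2 / Ω))) * (c ^ j * (r ^ (2*j)) / (j.factorial : ℝ) ^ 2)
        = (Real.exp (-(r ^ 2 * u ^ 2 / (4 * σ ^ 2 * s ^ 2))) *
            Real.exp (-(K + (K + 1) * r ^ 2 / Ω))) *
            ((2 * (K + 1) * r / Ω) * (c ^ j * (r ^ (2*j)) / (j.factorial : ℝ) ^ 2)) := by ring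
      _ = (Real.exp (-K) * Real.exp (-(L * r ^ 2))) *
            ((2 * (K + 1) * r / Ω) * (c ^ j * (r ^ (2*j)) / (j.factorial : ℝ) ^ 2)) := by rw [he]
      _ = 2 * (K + 1) / Ω * Real.exp (-K) * (c ^ j / (j.factorial : ℝ) ^ 2) *
            (r ^ (2 * j + 1) * Real.exp (-(L * r ^ 2))) := by rw [pow_succ]; ring
  -- integrability of each term
  have hInt : ∀ j : ℕ, Integrable (F j) (volume.restrict (Set.Ioi (0:ℝ))) := by
    intro j
    have hq : (-1:ℝ) < ((2*j+1 : ℕ):ℝ) := by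
      have : (0:ℝ) ≤ ((2*j+1:ℕ):ℝ) := Nat.cast_nonneg _
      linarith
    have h0 : IntegrableOn (fun x : ℝ => x ^ ((2*j+1:ℕ):ℝ) * Real.exp (-L * x ^ 2))
        (Set.Ioi 0) := integrableOn_rpow_mul_exp_neg_mul_sq hL hq
    have h1 : IntegrableOn (fun x : ℝ => x ^ (2*j+1) * Real.exp (-(L * x ^ 2)))
        (Set.Ioi 0) := by
      refine h0.congr_fun (fun x hx => ?_) measurableSet_Ioi
      dsimp only
      rw [Real.rpow_natCast, neg_mul]
    exact h1.const_mul _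
  -- value of each term's integral
  have hval : ∀ j : ℕ, ∫ r in Set.Ioi (0:ℝ), F j r
      = (2 * (K + 1) / Ω * Real.exp (-K) * (c ^ j / (j.factorial : ℝ) ^ 2)) *
        ((j.factorial : ℝ) / (2 * L ^ (j+1))) := by
    intro j
    simp only [hF]
    rw [integral_const_mul, aux_int hL j]
  have hval' : ∀ j : ℕ, ∫ r in Set.Ioi (0:ℝ), ‖F j r‖
      = (2 * (K + 1) / Ω * Real.exp (-K) * (c ^ j / (j.factorial : ℝ) ^ 2)) *
        ((j.factorial : ℝ) / (2 * L ^ (j+1))) := by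
    intro j
    rw [← hval j]
    refine setIntegral_congr_fun measurableSet_Ioi (fun r hr => ?_)
    have hr0 : (0:ℝ) < r := hr
    rw [Real.norm_eq_abs, abs_of_nonneg]
    exact mul_nonneg (hCj j) (by positivity)
  -- simplified value
  have hsimp : ∀ j : ℕ,
      (2 * (K + 1) / Ω * Real.exp (-K) * (c ^ j / (j.factorial : ℝ) ^ 2)) *
        ((j.factorial : ℝ) / (2 * L ^ (j+1)))
      = ((K + 1) / (Ω * L) * Real.exp (-K)) * ((c / L) ^ j / (j.factorial : ℝ)) := by
    intro j
    have hfac : ((j.factorial : ℝ)) ≠ 0 := Nat.cast_ne_zero.mpr j.factorial_ne_zero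
    have hLj : (L:ℝ) ^ j ≠ 0 := pow_ne_zero _ hL.ne'
    clear_value s a b L c D
    rw [div_pow, pow_succ]
    generalize c ^ j = X
    generalize hYe : L ^ j = Y at hLj ⊢
    field_simp
    rw [pow_succ, hYe]
    ring
  have hsum : Summable (fun j : ℕ => ∫ r in Set.Ioi (0:ℝ), ‖F j r‖) := by
    have : Summable (fun j : ℕ =>
        ((K + 1) / (Ω * L) * Real.exp (-K)) * ((c / L) ^ j / (j.factorial : ℝ))) :=
      (Real.summable_pow_div_factorial (c / L)).mul_left _
    refine this.congr (fun j => ?_)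
    rw [hval' j, hsimp j]
  -- swap integral and sum
  have hswap : (∫ r in Set.Ioi (0:ℝ), ∑' j : ℕ, F j r) = ∑' j : ℕ, ∫ r in Set.Ioi (0:ℝ), F j r :=
    (integral_tsum_of_summable_integral_norm hInt hsum).symm
  -- put it together
  calc (∫ r in Set.Ioi (0 : ℝ),
        Real.exp (-(r ^ 2 * u ^ 2 / (4 * σ ^ 2 * s ^ 2))) *
          ((2 * (K + 1) * r / Ω) * Real.exp (-(K + (K + 1) * r ^ 2 / Ω)) *
            ∑' j : ℕ, (K * (K + 1) * r ^ 2 / Ω) ^ j / ((Nat.factorial j : ℝ)) ^ 2))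
      = ∫ r in Set.Ioi (0:ℝ), ∑' j : ℕ, F j r := by
        refine setIntegral_congr_fun measurableSet_Ioi (fun r hr => ?_)
        rw [← hpt r hr]
        congr 2
        refine tsum_congr (fun j => ?_)
        congr 2
        rw [hc]; ring
    _ = ∑' j : ℕ, ∫ r in Set.Ioi (0:ℝ), F j r := hswap
    _ = ∑' j : ℕ, ((K + 1) / (Ω * L) * Real.exp (-K)) * ((c / L) ^ j / (j.factorial : ℝ)) := by
        refine tsum_congr (fun j => ?_); rw [hval j, hsimp j]
    _ = ((K + 1) / (Ω * L) * Real.exp (-K)) * Real.exp (c / L) := by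
        rw [tsum_mul_left, ← aux_exp_tsum]
    _ = (4 * (K + 1) * σ ^ 2 * s ^ 2 / D) * Real.exp (-(K * Ω * u ^ 2 / D)) := by
        have h1 : (K + 1) / (Ω * L) = 4 * (K + 1) * σ ^ 2 * s ^ 2 / D := by
          rw [hLdef, ha, hb, hD]
          rw [div_eq_div_iff (by positivity) (by positivity)]
          field_simp
        have h2 : Real.exp (-K) * Real.exp (c / L) = Real.exp (-(K * Ω * u ^ 2 / D)) := by
          rw [← Real.exp_add]
          congr 1
          rw [hLdef, ha, hb, hc, hD]
          field_simp
          ring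
        rw [mul_assoc, h2, h1]
end

section
/- Let a > 0 be a real number. Then the function F(K) = ( (K+1)/(a+K+1) ) · exp( −K a / (a+K+1) ) is strictly monotonically decreasing in K on [0, ∞); that is, for all 0 ≤ K₁ < K₂, F(K₂) < F(K₁). -/
open Real

lemma rician_hasDerivAt (a : ℝ) (ha : 0 < a) (K : ℝ) (hK : 0 ≤ K) :
    HasDerivAt (fun K : ℝ => ((K + 1) / (a + K + 1)) * Real.exp (-(K * a / (a + K + 1))))
      (-(a ^ 2 * K / (a + K + 1) ^ 3) * Real.exp (-(K * a / (a + K + 1)))) K := by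
  have hv : a + K + 1 ≠ 0 := by nlinarith
  have h1 : HasDerivAt (fun K : ℝ => (K + 1) / (a + K + 1))
      ((1 * (a + K + 1) - (K + 1) * 1) / (a + K + 1) ^ 2) K := by
    exact HasDerivAt.div ((hasDerivAt_id K).add_const 1)
      (((hasDerivAt_id K).const_add a).add_const 1) hv
  have h2 : HasDerivAt (fun K : ℝ => K * a / (a + K + 1))
      ((1 * a * (a + K + 1) - K * a * 1) / (a + K + 1) ^ 2) K := by
    exact HasDerivAt.div ((hasDerivAt_id K).mul_const a)
      (((hasDerivAt_id K).const_add a).add_const 1) hv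
  have h3 := ((h2.neg).exp)
  have h4 := h1.mul h3
  convert h4 using 1
  · rfl
  · rfl
  · rfl
  simp only [Pi.neg_apply]
  field_simp
  ring

/-- For `a > 0`, the function `F(K) = ((K+1)/(a+K+1)) exp(−Ka/(a+K+1))` is strictly
monotonically decreasing in `K` on `[0, ∞)`. -/
theorem rician_expectation_strict_anti (a : ℝ) (ha : 0 < a)
    (K₁ K₂ : ℝ) (hK₁ : 0 ≤ K₁) (h12 : K₁ < K₂) :
    ((K₂ + 1) / (a + K₂ + 1)) * Real.exp (-(K₂ * a / (a + K₂ + 1)))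
      < ((K₁ + 1) / (a + K₁ + 1)) * Real.exp (-(K₁ * a / (a + K₁ + 1))) := by
  set f : ℝ → ℝ := fun K => ((K + 1) / (a + K + 1)) * Real.exp (-(K * a / (a + K + 1))) with hf
  have key : StrictAntiOn f (Set.Ici (0 : ℝ)) := by
    apply strictAntiOn_of_deriv_neg (convex_Ici 0)
    · intro x hx
      exact (rician_hasDerivAt a ha x hx).continuousAt.continuousWithinAt
    · intro x hx
      rw [interior_Ici] at hx
      have hx0 : (0 : ℝ) < x := hx
      rw [(rician_hasDerivAt a ha x hx0.le).deriv]
      have hv : 0 < a + x + 1 := by linarith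
      have : 0 < a ^ 2 * x / (a + x + 1) ^ 3 := by positivity
      have he : 0 < Real.exp (-(x * a / (a + x + 1))) := Real.exp_pos _
      nlinarith
  exact key hK₁ (le_trans hK₁ h12.le) h12
end

section
/- (Optimality of the tail transmission pattern.) Let Ψ, c, μ, σ, and S(θ) be as in the standing definition, let 0 = θ_0 < θ_1 < ⋯ < θ_N = π/2 be a partition of [0, π/2] with weights b_t = (θ_t − θ_{t−1})/π, and set F(L) = Σ_{t=1}^{N} b_t · S(θ_t)^L. Let k ≥ 1 and P ≥ 1 be integers, set n = P·k, and for a ∈ {1, …, P} define ε_a(L) = min{ 1, (2^k − 1) · 2^{n − a k} · F(L) }. Let ℓ_1, …, ℓ_P be positive integers, let δ_1, …, δ_P be natural numbers, and let M = Σ_{i=1}^{P} δ_i. Define the tail sums L_a = Σ_{i=a}^{P} (ℓ_i + δ_i) for the arbitrary pattern and L*_a = M + Σ_{i=a}^{P} ℓ_i for the tail transmission pattern. Then 1 − Π_{a=1}^{P} (1 − ε_a(L*_a)) ≤ 1 − Π_{a=1}^{P} (1 − ε_a(L_a)). -/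
open Real MeasureTheory

/-- Standing definition: `S(θ) = Σ_{βi∈Ψ} Σ_{βj∈Ψ} 2^{−2c} ∫_ℂ exp(−|h(βi−βj)|²/(4σ² sin²θ)) dμ(h)`. -/
noncomputable def Sfun (Ψ : Finset ℂ) (c : ℕ) (μ : Measure ℂ) (σ θ : ℝ) : ℝ :=
  ∑ βi ∈ Ψ, ∑ βj ∈ Ψ, ((2 : ℝ) ^ (2 * c))⁻¹ *
    ∫ h, Real.exp (-(‖h * (βi - βj)‖ ^ 2 / (4 * σ ^ 2 * Real.sin θ ^ 2))) ∂μ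

/-- (Optimality of the tail transmission pattern.)  With `F(L) = Σ_t b_t S(θ_t)^L`,
`n = P·k`, `ε_a(L) = min{1, (2^k − 1) 2^{n−ak} F(L)}`, tail sums
`L_a = Σ_{i=a}^P (ℓ_i + δ_i)` and `L*_a = M + Σ_{i=a}^P ℓ_i` where `M = Σ_i δ_i`,
the BLER upper bound of the tail transmission pattern is the lowest:
`1 − Π_a (1 − ε_a(L*_a)) ≤ 1 − Π_a (1 − ε_a(L_a))`. -/
theorem ttp_optimal (Ψ : Finset ℂ) (c : ℕ) (hc : 0 < c) (hΨ : Ψ.card = 2 ^ c)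
    (μ : Measure ℂ) [IsProbabilityMeasure μ] (σ : ℝ) (hσ : 0 < σ)
    (N : ℕ) (hN : 0 < N) (θ : ℕ → ℝ)
    (h0 : θ 0 = 0) (hend : θ N = π / 2) (hmono : ∀ t < N, θ t < θ (t + 1))
    (F : ℕ → ℝ)
    (hF : ∀ L, F L = ∑ t ∈ Finset.range N,
        ((θ (t + 1) - θ t) / π) * Sfun Ψ c μ σ (θ (t + 1)) ^ L)
    (k P n : ℕ) (hk : 1 ≤ k) (hP : 1 ≤ P) (hn : n = P * k)
    (ε : ℕ → ℕ → ℝ)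
    (hε : ∀ a L, ε a L = min 1 (((2 : ℝ) ^ k - 1) * 2 ^ (n - a * k) * F L))
    (ℓ δ : ℕ → ℕ) (hℓ : ∀ i ∈ Finset.Icc 1 P, 0 < ℓ i)
    (M : ℕ) (hM : M = ∑ i ∈ Finset.Icc 1 P, δ i)
    (Lpat Lstar : ℕ → ℕ)
    (hLpat : ∀ a, Lpat a = ∑ i ∈ Finset.Icc a P, (ℓ i + δ i))
    (hLstar : ∀ a, Lstar a = M + ∑ i ∈ Finset.Icc a P, ℓ i) :
    1 - ∏ a ∈ Finset.Icc 1 P, (1 - ε a (Lstar a))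
      ≤ 1 - ∏ a ∈ Finset.Icc 1 P, (1 - ε a (Lpat a)) := by
  -- Each integral is in [0,1]
  have hint : ∀ θ' : ℝ, ∀ βi βj : ℂ,
      (0 : ℝ) ≤ (∫ h, Real.exp (-(‖h * (βi - βj)‖ ^ 2 /
        (4 * σ ^ 2 * Real.sin θ' ^ 2))) ∂μ) ∧
      (∫ h, Real.exp (-(‖h * (βi - βj)‖ ^ 2 /
        (4 * σ ^ 2 * Real.sin θ' ^ 2))) ∂μ) ≤ 1 := by
    intro θ' βi βj
    set f : ℂ → ℝ := fun h => Real.exp (-(‖h * (βi - βj)‖ ^ 2 /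
        (4 * σ ^ 2 * Real.sin θ' ^ 2))) with hf
    have hcont : Continuous f := by
      apply Real.continuous_exp.comp
      exact (((continuous_norm.comp (continuous_mul_right _)).pow 2).div_const _).neg
    have hfle : ∀ h, f h ≤ 1 := by
      intro h
      have : -(‖h * (βi - βj)‖ ^ 2 / (4 * σ ^ 2 * Real.sin θ' ^ 2)) ≤ 0 := by
        apply neg_nonpos_of_nonneg
        apply div_nonneg (sq_nonneg _)
        positivity
      simpa [hf] using Real.exp_le_one_iff.mpr this
    have hfnn : ∀ h, 0 ≤ f h := fun h => (Real.exp_pos _).le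
    have hintg : Integrable f μ := by
      apply Integrable.mono' (integrable_const (1 : ℝ))
        hcont.aestronglyMeasurable
      filter_upwards with h
      rw [Real.norm_eq_abs, abs_of_nonneg (hfnn h)]
      exact hfle h
    constructor
    · exact integral_nonneg hfnn
    · calc (∫ h, f h ∂μ) ≤ ∫ _, (1 : ℝ) ∂μ :=
            integral_mono hintg (integrable_const 1) hfle
        _ = 1 := by simp
  -- Sfun bounds
  have hS0 : ∀ θ', 0 ≤ Sfun Ψ c μ σ θ' := by
    intro θ'
    apply Finset.sum_nonneg; intro i _
    apply Finset.sum_nonneg; intro j _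
    exact mul_nonneg (by positivity) (hint θ' i j).1
  have hS1 : ∀ θ', Sfun Ψ c μ σ θ' ≤ 1 := by
    intro θ'
    have : Sfun Ψ c μ σ θ' ≤ ∑ βi ∈ Ψ, ∑ βj ∈ Ψ, ((2 : ℝ) ^ (2 * c))⁻¹ * 1 := by
      apply Finset.sum_le_sum; intro i _
      apply Finset.sum_le_sum; intro j _
      exact mul_le_mul_of_nonneg_left (hint θ' i j).2 (by positivity)
    calc Sfun Ψ c μ σ θ' ≤ ∑ βi ∈ Ψ, ∑ βj ∈ Ψ, ((2 : ℝ) ^ (2 * c))⁻¹ * 1 := this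
      _ = (Ψ.card : ℝ) * ((Ψ.card : ℝ) * ((2 : ℝ) ^ (2 * c))⁻¹) := by
          simp [Finset.sum_const, mul_comm]
      _ = 1 := by
          rw [hΨ]
          push_cast
          rw [two_mul, pow_add]
          field_simp
  -- F is antitone and nonneg
  have hFmono : ∀ L L' : ℕ, L ≤ L' → F L' ≤ F L := by
    intro L L' hLL
    rw [hF, hF]
    apply Finset.sum_le_sum
    intro t ht
    have hb : 0 ≤ (θ (t + 1) - θ t) / π :=
      div_nonneg (sub_nonneg.mpr (hmono t (Finset.mem_range.mp ht)).le) Real.pi_pos.le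
    exact mul_le_mul_of_nonneg_left
      (pow_le_pow_of_le_one (hS0 _) (hS1 _) hLL) hb
  have hFnn : ∀ L, 0 ≤ F L := by
    intro L
    rw [hF]
    apply Finset.sum_nonneg
    intro t ht
    have hb : 0 ≤ (θ (t + 1) - θ t) / π :=
      div_nonneg (sub_nonneg.mpr (hmono t (Finset.mem_range.mp ht)).le) Real.pi_pos.le
    exact mul_nonneg hb (pow_nonneg (hS0 _) _)
  -- ε bounds and antitone
  have hεle1 : ∀ a L, ε a L ≤ 1 := fun a L => by rw [hε]; exact min_le_left _ _
  have hεmono : ∀ a L L', L ≤ L' → ε a L' ≤ ε a L := by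
    intro a L L' hLL
    rw [hε, hε]
    apply min_le_min le_rfl
    apply mul_le_mul_of_nonneg_left (hFmono L L' hLL)
    have h2 : (1 : ℝ) ≤ (2 : ℝ) ^ k := one_le_pow₀ (by norm_num)
    exact mul_nonneg (by linarith) (by positivity)
  -- Lpat ≤ Lstar on Icc 1 P
  have hLle : ∀ a ∈ Finset.Icc 1 P, Lpat a ≤ Lstar a := by
    intro a ha
    rw [hLpat, hLstar, Finset.sum_add_distrib, hM, add_comm]
    apply Nat.add_le_add_right
    apply Finset.sum_le_sum_of_subset
    apply Finset.Icc_subset_Icc_left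
    exact (Finset.mem_Icc.mp ha).1
  -- conclude
  apply sub_le_sub_left
  apply Finset.prod_le_prod
  · intro a _
    rw [hε]
    have : min 1 (((2 : ℝ) ^ k - 1) * 2 ^ (n - a * k) * F (Lpat a)) ≤ 1 := min_le_left _ _
    linarith
  · intro a ha
    have := hεmono a (Lpat a) (Lstar a) (hLle a ha)
    linarith
end
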